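/- Let d_1,...,d_r be positive integers with coprime q_i (gcd(q_i,d_i)=1) such that Σ q_i/d_i ∈ ℤ, and set κ = lcm(d_i). In the abelian group generated by A_1,...,A_r, F with relations d_iA_i = F, the element T := Σ_{i=1}^r q_iA_i - α·F (where α = Σ q_i/d_i) has order exactly κ. -/
import Mathlib

/-- The abelian group with generators `A 1, ..., A r, F` and relations `d i • A i = F`,
modelled as the quotient of `(Fin r → ℤ) × ℤ` (coordinates: the `A i`'s and `F`) by the
span of the relation vectors `d i • A i - F`. -/
abbrev RelMod (r : ℕ) (d : Fin r → ℕ) : Type :=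
  ((Fin r → ℤ) × ℤ) ⧸ Submodule.span ℤ
    (Set.range fun i : Fin r => ((Pi.single i (d i : ℤ) : Fin r → ℤ), (-1 : ℤ)))

/-- Let `d 1, ..., d r` be positive integers with `gcd (q i) (d i) = 1` and
`∑ q i / d i = α ∈ ℤ`, and `κ = lcm(d i)`.  In the abelian group generated by
`A 1, ..., A r, F` with relations `d i • A i = F`, the element
`T = ∑ q i • A i - α • F` has order exactly `κ`. -/
theorem order_of_T (r : ℕ) (d : Fin r → ℕ) (hd : ∀ i, 0 < d i)
    (q : Fin r → ℤ) (hcop : ∀ i, Int.gcd (q i) (d i) = 1)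
    (α : ℤ) (hα : ∑ i, (q i : ℚ) / (d i : ℚ) = (α : ℚ)) :
    addOrderOf ((Submodule.Quotient.mk ((fun i => q i), -α)) : RelMod r d)
      = Finset.univ.lcm d := by
  set κ : ℕ := Finset.univ.lcm d with hκ
  have hκ0 : κ ≠ 0 := by
    intro h0
    rw [hκ] at h0
    rcases (Finset.lcm_eq_zero_iff).mp h0 with ⟨i, _, hi⟩
    exact (hd i).ne' hi
  set S : Submodule ℤ ((Fin r → ℤ) × ℤ) := Submodule.span ℤ
    (Set.range fun i : Fin r => ((Pi.single i (d i : ℤ) : Fin r → ℤ), (-1 : ℤ))) with hS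
  have hcomp : ∀ c : Fin r → ℤ,
      (∑ i, c i • ((Pi.single i (d i : ℤ) : Fin r → ℤ), (-1 : ℤ)))
        = ((fun j => c j * d j), -∑ i, c i) := by
    intro c
    refine Prod.ext ?_ ?_
    · funext j
      simp only [Prod.fst_sum, Prod.smul_fst, Finset.sum_apply, Pi.smul_apply,
        Pi.single_apply, smul_eq_mul, mul_ite, mul_zero]
      rw [Finset.sum_ite_eq]
      simp
    · simp [Prod.snd_sum, Finset.sum_neg_distrib]
  have hmem : ∀ n : ℤ, ((fun i => n * q i, -(n * α)) : (Fin r → ℤ) × ℤ) ∈ S ↔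
      ∀ i, (d i : ℤ) ∣ n * q i := by
    intro n
    constructor
    · intro h
      rw [hS, Submodule.mem_span_range_iff_exists_fun ℤ] at h
      obtain ⟨c, hc⟩ := h
      rw [hcomp] at hc
      intro j
      have h1 := congrFun (congrArg Prod.fst hc) j
      simp only at h1
      exact ⟨c j, by rw [← h1]; ring⟩
    · intro h
      rw [hS, Submodule.mem_span_range_iff_exists_fun ℤ]
      refine ⟨fun i => n * q i / d i, ?_⟩
      rw [hcomp]
      have hdiv : ∀ i, (n * q i / d i) * d i = n * q i := fun i =>
        Int.ediv_mul_cancel (h i)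
      have hsum : ∑ i, n * q i / d i = n * α := by
        have : ((∑ i, n * q i / d i : ℤ) : ℚ) = ((n * α : ℤ) : ℚ) := by
          push_cast
          rw [← hα, Finset.mul_sum]
          refine Finset.sum_congr rfl fun i _ => ?_
          have hd0 : ((d i : ℕ) : ℚ) ≠ 0 := by
            exact_mod_cast (hd i).ne'
          rw [← mul_div_assoc, eq_div_iff hd0]
          exact_mod_cast hdiv i
        exact_mod_cast this
      refine Prod.ext ?_ ?_
      · funext j
        exact hdiv j
      · simp [hsum]
  have key : ∀ n : ℕ, (n • (Submodule.Quotient.mk ((fun i => q i), -α) : RelMod r d) = 0)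
      ↔ κ ∣ n := by
    intro n
    have e1 : (n • (Submodule.Quotient.mk ((fun i => q i), -α) : RelMod r d))
        = Submodule.Quotient.mk ((n : ℤ) • ((fun i => q i), -α)) := by
      rw [Submodule.Quotient.mk_smul, natCast_zsmul]
    rw [e1, Submodule.Quotient.mk_eq_zero]
    have e2 : ((n : ℤ) • (((fun i => q i), -α) : (Fin r → ℤ) × ℤ))
        = ((fun i => (n : ℤ) * q i, -((n : ℤ) * α)) : (Fin r → ℤ) × ℤ) := by
      refine Prod.ext ?_ ?_
      · funext j; simp [mul_comm]
      · simp
    rw [e2, hmem]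
    constructor
    · intro h
      have hdn : ∀ i, (d i : ℤ) ∣ (n : ℤ) := by
        intro i
        have hc : IsCoprime (q i) (d i : ℤ) := Int.isCoprime_iff_gcd_eq_one.mpr (hcop i)
        have := h i; rw [mul_comm] at this
        exact hc.symm.dvd_of_dvd_mul_left this
      exact Finset.lcm_dvd fun i _ => Int.natCast_dvd_natCast.mp (hdn i)
    · intro h i
      have : d i ∣ n := dvd_trans (Finset.dvd_lcm (Finset.mem_univ i)) h
      exact Dvd.dvd.mul_right (Int.natCast_dvd_natCast.mpr this) _
  have h1 : addOrderOf (Submodule.Quotient.mk ((fun i => q i), -α) : RelMod r d) ∣ κ :=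
    addOrderOf_dvd_of_nsmul_eq_zero ((key κ).mpr dvd_rfl)
  have h2 : κ ∣ addOrderOf (Submodule.Quotient.mk ((fun i => q i), -α) : RelMod r d) :=
    (key _).mp (addOrderOf_nsmul_eq_zero _)
  exact Nat.dvd_antisymm h1 h2
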